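/- Let X be a separable complex Banach space and let T be a bounded linear operator on X. If both A = span{x ∈ X : Tx = αx for some α ∈ ℂ with |α| < 1} and B = span{y ∈ X : Ty = λy for some λ ∈ ℂ with |λ| > 1} are dense in X, then T is topologically mixing. -/

import Mathlib

open Filter Topology Set Pointwise

variable {X : Type*} [NormedAddCommGroup X] [NormedSpace ℂ X]

/-- `T` is compound: for all nonempty open `U, V` there are `N` and scalars `α n`
with `0 < ‖α n‖ ≤ 1` such that `T^n (α n • U) ∩ V ≠ ∅` for all `n ≥ N`. -/
def Compound (T : X →L[ℂ] X) : Prop :=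
  ∀ U V : Set X, IsOpen U → U.Nonempty → IsOpen V → V.Nonempty →
    ∃ N : ℕ, ∃ α : ℕ → ℂ, ∀ n ≥ N,
      (0 < ‖α n‖ ∧ ‖α n‖ ≤ 1) ∧ (((T ^ n) '' (α n • U)) ∩ V).Nonempty

/-- `T` is topologically mixing. -/
def TopologicallyMixing (T : X →L[ℂ] X) : Prop :=
  ∀ U V : Set X, IsOpen U → U.Nonempty → IsOpen V → V.Nonempty →
    ∃ N : ℕ, ∀ n ≥ N, (((T ^ n) '' U) ∩ V).Nonempty

/-- `T` is disk transitive. -/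
def DiskTransitive (T : X →L[ℂ] X) : Prop :=
  ∀ U V : Set X, IsOpen U → U.Nonempty → IsOpen V → V.Nonempty →
    ∃ n : ℕ, ∃ α : ℂ, 0 < ‖α‖ ∧ ‖α‖ ≤ 1 ∧ (((T ^ n) '' (α • U)) ∩ V).Nonempty

/-- The direct sum `T 0 ⊕ ⋯ ⊕ T (k-1)` is `k`-bitransitive: for all nonempty open
`U i, V i` there are `n` and scalars `α i` with `0 < ‖α i‖ ≤ 1` such that
`(T 0 ⊕ ⋯)^n (α 0 • U 0 ⊕ ⋯) ∩ (V 0 ⊕ ⋯) ≠ ∅`, stated componentwise (an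
intersection of product sets is nonempty iff each componentwise intersection is). -/
def kBitransitive {k : ℕ} (T : Fin k → X →L[ℂ] X) : Prop :=
  ∀ U V : Fin k → Set X,
    (∀ i, IsOpen (U i) ∧ (U i).Nonempty) →
    (∀ i, IsOpen (V i) ∧ (V i).Nonempty) →
    ∃ n : ℕ, ∃ α : Fin k → ℂ,
      (∀ i, 0 < ‖α i‖ ∧ ‖α i‖ ≤ 1) ∧
      ∀ i, (((T i ^ n) '' (α i • U i)) ∩ V i).Nonempty

/-- The cross set `C_T(A,B)`. -/
def crossSet (T : X →L[ℂ] X) (A B : Set X) : Set ℕ :=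
  {n | ∃ α : ℂ, 0 < ‖α‖ ∧ ‖α‖ ≤ 1 ∧ (((T ^ n) '' (α • A)) ∩ B).Nonempty}

/-- The junction set `J_T(A,B)`. -/
def junctionSet (T : X →L[ℂ] X) (A B : Set X) : Set (ℕ × ℂ) :=
  {p | 0 < ‖p.2‖ ∧ ‖p.2‖ ≤ 1 ∧ (((T ^ p.1) '' (p.2 • A)) ∩ B).Nonempty}

/-- A subset of `ℕ × ℂ` is bifinite if it contains `{(n, a n) : n ∈ K}` for some
cofinite `K ⊆ ℕ` and some sequence `a : ℕ → ℂ`. -/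
def Bifinite (A : Set (ℕ × ℂ)) : Prop :=
  ∃ K : Set ℕ, Kᶜ.Finite ∧ ∃ a : ℕ → ℂ, ∀ n ∈ K, (n, a n) ∈ A

lemma pow_apply_eigen (T : X →L[ℂ] X) {x : X} {α : ℂ} (h : T x = α • x) (n : ℕ) :
    (T ^ n) x = α ^ n • x := by
  induction n with
  | zero => simp
  | succ n ih =>
    rw [pow_succ, ContinuousLinearMap.mul_apply, h, map_smul, ih, smul_smul, ← pow_succ']

/-- Godefroy–Shapiro criterion for topologically mixing operators. -/
theorem topologicallyMixing_of_dense_eigenvector_spans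
    {X : Type*} [NormedAddCommGroup X] [NormedSpace ℂ X] [CompleteSpace X]
    [TopologicalSpace.SeparableSpace X] (T : X →L[ℂ] X)
    (hA : Dense ((Submodule.span ℂ {x : X | ∃ α : ℂ, ‖α‖ < 1 ∧ T x = α • x} :
      Submodule ℂ X) : Set X))
    (hB : Dense ((Submodule.span ℂ {y : X | ∃ l : ℂ, 1 < ‖l‖ ∧ T y = l • y} :
      Submodule ℂ X) : Set X)) :
    TopologicallyMixing T := by
  intro U V hU hUne hV hVne
  obtain ⟨x, hxA, hxU⟩ := hA.exists_mem_open hU hUne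
  obtain ⟨y, hyB, hyV⟩ := hB.exists_mem_open hV hVne
  rw [SetLike.mem_coe] at hxA hyB
  have key1 : ∀ z ∈ Submodule.span ℂ {x : X | ∃ α : ℂ, ‖α‖ < 1 ∧ T x = α • x},
      Tendsto (fun n => (T ^ n) z) atTop (𝓝 0) := by
    intro z hz
    induction hz using Submodule.span_induction with
    | mem z hz =>
      obtain ⟨α, hα, hTz⟩ := hz
      simp_rw [pow_apply_eigen T hTz]
      simpa using (tendsto_pow_atTop_nhds_zero_of_norm_lt_one hα).smul_const z
    | zero => simp
    | add a b _ _ iha ihb => simpa using iha.add ihb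
    | smul c a _ iha => simpa using iha.const_smul c
  have key2 : ∀ z ∈ Submodule.span ℂ {y : X | ∃ l : ℂ, 1 < ‖l‖ ∧ T y = l • y},
      ∃ w : ℕ → X, Tendsto w atTop (𝓝 0) ∧ ∀ n, (T ^ n) (w n) = z := by
    intro z hz
    induction hz using Submodule.span_induction with
    | mem z hz =>
      obtain ⟨l, hl, hTz⟩ := hz
      have hl0 : l ≠ 0 := by
        intro h; rw [h, norm_zero] at hl; linarith
      refine ⟨fun n => l⁻¹ ^ n • z, ?_, fun n => ?_⟩
      · have hli : ‖l⁻¹‖ < 1 := by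
          rw [norm_inv]
          exact inv_lt_one_of_one_lt₀ hl
        simpa using (tendsto_pow_atTop_nhds_zero_of_norm_lt_one hli).smul_const z
      · rw [map_smul, pow_apply_eigen T hTz, smul_smul, ← mul_pow,
          inv_mul_cancel₀ hl0, one_pow, one_smul]
    | zero => exact ⟨fun _ => 0, tendsto_const_nhds, by simp⟩
    | add a b _ _ iha ihb =>
      obtain ⟨w1, h1, h1'⟩ := iha
      obtain ⟨w2, h2, h2'⟩ := ihb
      exact ⟨fun n => w1 n + w2 n, by simpa using h1.add h2,
        fun n => by rw [map_add, h1' n, h2' n]⟩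
    | smul c a _ iha =>
      obtain ⟨w, h, h'⟩ := iha
      exact ⟨fun n => c • w n, by simpa using h.const_smul c, fun n => by simp [h' n]⟩
  have hx0 := key1 x hxA
  obtain ⟨w, hw, hwT⟩ := key2 y hyB
  have h1 : Tendsto (fun n => x + w n) atTop (𝓝 x) := by
    simpa using (tendsto_const_nhds : Tendsto (fun _ : ℕ => x) atTop _).add hw
  have h2 : Tendsto (fun n => (T ^ n) x + y) atTop (𝓝 y) := by
    simpa using hx0.add (tendsto_const_nhds : Tendsto (fun _ : ℕ => y) atTop _)
  have e1 : ∀ᶠ n in atTop, x + w n ∈ U := h1.eventually (hU.eventually_mem hxU)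
  have e2 : ∀ᶠ n in atTop, (T ^ n) x + y ∈ V := h2.eventually (hV.eventually_mem hyV)
  obtain ⟨N, hN⟩ := eventually_atTop.mp (e1.and e2)
  refine ⟨N, fun n hn => ⟨(T ^ n) (x + w n), ⟨x + w n, (hN n hn).1, rfl⟩, ?_⟩⟩
  rw [map_add, hwT n]
  exact (hN n hn).2
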